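/- In the skew brace on ℤ given by a ⊕ b = a + (−1)^a · b and a ⊙ b = a + b, the multiplicative group (ℤ,⊙) is the infinite cyclic group (ℤ,+), while the additive group (ℤ,⊕) is not abelian and contains an element of order 2 (namely 1 ⊕ 1 = 0 with 1 ≠ 0); in particular the additive group is not torsion-free, hence not isomorphic to (ℤ,+) and not left-orderable. -/

import Mathlib

/-- The operation `a ⊕ b = a + (-1)^a * b` on the integers. -/
def zop (a b : ℤ) : ℤ := a + (((-1 : ℤˣ) ^ a : ℤˣ) : ℤ) * b

/-- The multiplicative operation `a ⊙ b = a + b` on the integers. -/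
def zodot (a b : ℤ) : ℤ := a + b

lemma zop_one_zero : zop 1 0 = 1 := by simp [zop]

lemma zop_one_one : zop 1 1 = 0 := by
  simp [zop]

lemma zop_one_two : zop 1 2 = -1 := by simp [zop]

lemma zop_two_one : zop 2 1 = 3 := by
  simp [zop]

/-- For the skew brace on `ℤ` with `a ⊕ b = a + (-1)^a * b` and `a ⊙ b = a + b`:
the multiplicative group is `(ℤ, +)`; the additive group is not abelian and has an
element of order `2` (namely `1`, since `1 ⊕ 1 = 0` and `1 ≠ 0`); in particular the
additive group is not isomorphic to `(ℤ, +)` and is not left-orderable (it admits no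
strict total order invariant under left `⊕`-multiplication). -/
theorem int_zop_skew_brace_properties :
    (∀ a b : ℤ, zodot a b = a + b) ∧
    (∃ a b : ℤ, zop a b ≠ zop b a) ∧
    (zop 1 1 = 0 ∧ (1 : ℤ) ≠ 0) ∧
    (¬ ∃ f : ℤ ≃ ℤ, ∀ a b : ℤ, f (zop a b) = f a + f b) ∧
    (¬ ∃ lt : ℤ → ℤ → Prop, IsStrictTotalOrder ℤ lt ∧
        ∀ c a b : ℤ, lt a b → lt (zop c a) (zop c b)) := by
  refine ⟨fun a b => rfl, ⟨1, 2, ?_⟩, ⟨zop_one_one, one_ne_zero⟩, ?_, ?_⟩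
  · rw [zop_one_two, zop_two_one]; norm_num
  · rintro ⟨f, hf⟩
    have h0 : f 0 = f 0 + f 0 := by
      have := hf 0 0
      simpa [zop] using this
    have hf0 : f 0 = 0 := by linarith
    have h1 : f 0 = f 1 + f 1 := by
      have := hf 1 1
      rwa [zop_one_one] at this
    have hf1 : f 1 = 0 := by omega
    exact one_ne_zero (f.injective (hf1.trans hf0.symm))
  · rintro ⟨lt, hto, hmul⟩
    have h01 : lt 0 1 ∨ lt 1 0 := by
      rcases (Classical.em (lt 0 1)).elim Or.inl (fun h0 => (Classical.em (lt 1 0)).elim (fun h => Or.inr (Or.inr h)) (fun h1 => Or.inr (Or.inl (hto.trichotomous 0 1 h0 h1)))) with h | h | h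
      · exact Or.inl h
      · exact absurd h (by norm_num)
      · exact Or.inr h
    have step : ∀ h : lt 0 1, lt 1 0 := fun h => by
      have := hmul 1 0 1 h
      rwa [zop_one_zero, zop_one_one] at this
    have step' : ∀ h : lt 1 0, lt 0 1 := fun h => by
      have := hmul 1 1 0 h
      rwa [zop_one_zero, zop_one_one] at this
    have : lt 0 0 := by
      rcases h01 with h | h
      · exact hto.trans 0 1 0 h (step h)
      · exact hto.trans 0 1 0 (step' h) h
    exact hto.irrefl 0 this
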